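/- Let n ≥ 2, p > 2 real, c ∈ (0, 1/2], and let A be the 2n×n matrix with cyclic rows e_i − e_{i+1} and e_i + e_{i+1}. If y ∈ R^n satisfies ‖y‖_p^p = n and min over x ∈ {−1,1}^n of ‖y − x‖_∞ ≥ c, then ‖Ay‖_p^p ≤ n·2^p − (3(p−2)/(2^p n^2)) c^2. -/

import Mathlib

open Finset

private lemma N1 (p : ℝ) (hp : 2 < p) (x : ℝ) (hx0 : 0 ≤ x) (hx1 : x ≤ 1) :
    2 + p ^ 2 / 2 * x ^ 2 ≤ (1 + x) ^ p + (1 - x) ^ p := by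
  have hp1 : (1:ℝ) ≤ p - 1 := by linarith
  set Φ : ℝ → ℝ := fun t => (1 + t) ^ p + (1 - t) ^ p - p ^ 2 / 2 * t ^ 2 with hΦ
  have hD : ∀ t ∈ Set.Ioo (0:ℝ) 1, HasDerivAt Φ
      (1 * p * (1 + t) ^ (p - 1) + (-1) * p * (1 - t) ^ (p - 1) - p ^ 2 / 2 * (2 * t)) t := by
    intro t ht
    have hd1 : HasDerivAt (fun t : ℝ => (1 + t) ^ p) (1 * p * (1 + t) ^ (p - 1)) t := by
      have h : HasDerivAt (fun t : ℝ => 1 + t) 1 t := (hasDerivAt_id t).const_add 1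
      exact h.rpow_const (Or.inr (by linarith))
    have hd2 : HasDerivAt (fun t : ℝ => (1 - t) ^ p) ((-1) * p * (1 - t) ^ (p - 1)) t := by
      have h : HasDerivAt (fun t : ℝ => 1 - t) (-1) t := (hasDerivAt_id t).const_sub 1
      exact h.rpow_const (Or.inr (by linarith))
    have hd3 : HasDerivAt (fun t : ℝ => p ^ 2 / 2 * t ^ 2) (p ^ 2 / 2 * (2 * t)) t := by
      have h := (hasDerivAt_pow 2 t).const_mul (p ^ 2 / 2)
      refine h.congr_deriv ?_
      norm_num
    exact (hd1.add hd2).sub hd3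
  have hmono : MonotoneOn Φ (Set.Icc 0 1) := by
    have c1 : Continuous fun t : ℝ => (1 + t) ^ p :=
      (continuous_const.add continuous_id).rpow_const (fun t => Or.inr (by linarith))
    have c2 : Continuous fun t : ℝ => (1 - t) ^ p :=
      (continuous_const.sub continuous_id).rpow_const (fun t => Or.inr (by linarith))
    apply monotoneOn_of_deriv_nonneg (convex_Icc 0 1)
    · exact ((c1.add c2).sub (continuous_const.mul (continuous_pow 2))).continuousOn
    · intro t ht
      rw [interior_Icc] at ht
      exact (hD t ht).differentiableAt.differentiableWithinAt
    · intro t ht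
      rw [interior_Icc] at ht
      rw [(hD t ht).deriv]
      obtain ⟨ht0, ht1⟩ := ht
      have hbern : 1 + (p - 1) * t ≤ (1 + t) ^ (p - 1) :=
        one_add_mul_self_le_rpow_one_add (by linarith) hp1
      have hsmall : (1 - t) ^ (p - 1) ≤ 1 - t := by
        have h := Real.rpow_le_rpow_of_exponent_ge (by linarith : (0:ℝ) < 1 - t)
          (by linarith : (1:ℝ) - t ≤ 1) hp1
        rwa [Real.rpow_one] at h
      have hppos : (0:ℝ) < p := by linarith
      have hkey : p * t ≤ (1 + t) ^ (p - 1) - (1 - t) ^ (p - 1) := by linarith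
      have h2 := mul_le_mul_of_nonneg_left hkey hppos.le
      nlinarith [h2]
  have h0 : Φ 0 ≤ Φ x := hmono (Set.mem_Icc.mpr ⟨le_refl 0, zero_le_one⟩)
    (Set.mem_Icc.mpr ⟨hx0, hx1⟩) hx0
  have hΦ0 : Φ 0 = 2 := by norm_num [hΦ, Real.one_rpow]
  rw [hΦ0] at h0
  simp only [hΦ] at h0
  linarith

private lemma normIneq (p : ℝ) (hp : 2 < p) (x : ℝ) (hx0 : 0 ≤ x) (hx1 : x ≤ 1)
    (hN1 : 2 + p ^ 2 / 2 * x ^ 2 ≤ (1 + x) ^ p + (1 - x) ^ p) :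
    2 + 2 * x ^ p + 2 * (p - 2) * x ^ 2 ≤ (1 + x) ^ p + (1 - x) ^ p := by
  have hxp : x ^ p ≤ x ^ 2 := by
    rcases eq_or_lt_of_le hx0 with h | h
    · rw [← h, Real.zero_rpow (by linarith : p ≠ 0)]
      positivity
    · calc x ^ p ≤ x ^ (2:ℝ) := Real.rpow_le_rpow_of_exponent_ge h hx1 (by linarith)
        _ = x ^ (2:ℕ) := by rw [Real.rpow_two]
  nlinarith [mul_nonneg (sq_nonneg (p - 2)) (sq_nonneg x)]

private lemma clarkson_aux (p : ℝ) (hp : 2 < p) (a b : ℝ) (hb : 0 ≤ b) (hab : b ≤ a) :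
    (a + b) ^ p + |a - b| ^ p + (p - 2) * 2 ^ p * ((a + b) / 2) ^ (p - 2) * ((a - b) / 2) ^ 2
      ≤ 2 ^ (p - 1) * (a ^ p + b ^ p) := by
  have hp0 : p ≠ 0 := by linarith
  rcases eq_or_lt_of_le (hb.trans hab) with h0 | ha
  · have hb0 : b = 0 := le_antisymm (h0 ▸ hab) hb
    rw [← h0, hb0]
    norm_num [Real.zero_rpow hp0, Real.zero_rpow (show p - 2 ≠ 0 by linarith)]
  · set μ : ℝ := (a + b) / 2 with hμdef
    set δ : ℝ := (a - b) / 2 with hδdef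
    have hμ : 0 < μ := by rw [hμdef]; linarith
    have hδ0 : 0 ≤ δ := by rw [hδdef]; linarith
    set x : ℝ := δ / μ with hxdef
    have hx0 : 0 ≤ x := div_nonneg hδ0 hμ.le
    have hx1 : x ≤ 1 := by
      rw [hxdef, div_le_one hμ, hδdef, hμdef]; linarith
    have hδx : δ = μ * x := by rw [hxdef]; field_simp
    have h1x : (0:ℝ) ≤ 1 + x := by linarith
    have h1x' : (0:ℝ) ≤ 1 - x := by linarith
    have hax : a = μ * (1 + x) := by
      rw [mul_add, mul_one, ← hδx, hμdef, hδdef]; ring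
    have hbx : b = μ * (1 - x) := by
      rw [mul_sub, mul_one, ← hδx, hμdef, hδdef]; ring
    have e1 : a ^ p = μ ^ p * (1 + x) ^ p := by
      rw [hax, Real.mul_rpow hμ.le h1x]
    have e2 : b ^ p = μ ^ p * (1 - x) ^ p := by
      rw [hbx, Real.mul_rpow hμ.le h1x']
    have e3 : (a + b) ^ p = 2 ^ p * μ ^ p := by
      rw [show a + b = 2 * μ by rw [hμdef]; ring, Real.mul_rpow (by norm_num) hμ.le]
    have e4 : |a - b| ^ p = 2 ^ p * μ ^ p * x ^ p := by
      rw [abs_of_nonneg (by linarith : (0:ℝ) ≤ a - b),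
        show a - b = 2 * (μ * x) by rw [← hδx, hδdef]; ring,
        Real.mul_rpow (by norm_num) (by positivity),
        Real.mul_rpow hμ.le hx0, mul_assoc]
    have e5 : μ ^ (p - 2) * δ ^ 2 = μ ^ p * x ^ 2 := by
      have h : μ ^ (p - 2) * μ ^ (2:ℕ) = μ ^ p := by
        rw [← Real.rpow_natCast μ 2, ← Real.rpow_add hμ]
        norm_num
      rw [hδx, mul_pow, ← mul_assoc, h]
    have e6 : (2:ℝ) ^ p = 2 ^ (p - 1) * 2 := by
      rw [← Real.rpow_add_one (by norm_num : (2:ℝ) ≠ 0) (p - 1)]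
      norm_num
    have hN := normIneq p hp x hx0 hx1 (N1 p hp x hx0 hx1)
    have hpos : (0:ℝ) ≤ 2 ^ (p - 1) * μ ^ p := by positivity
    have key := mul_le_mul_of_nonneg_left hN hpos
    calc (a + b) ^ p + |a - b| ^ p + (p - 2) * 2 ^ p * μ ^ (p - 2) * δ ^ 2
        = 2 ^ (p - 1) * μ ^ p * (2 + 2 * x ^ p + 2 * (p - 2) * x ^ 2) := by
          rw [e3, e4, mul_assoc ((p - 2) * 2 ^ p), e5, e6]; ring
      _ ≤ 2 ^ (p - 1) * μ ^ p * ((1 + x) ^ p + (1 - x) ^ p) := key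
      _ = 2 ^ (p - 1) * (a ^ p + b ^ p) := by rw [e1, e2]; ring

private lemma clarkson (p : ℝ) (hp : 2 < p) (a b : ℝ) (ha : 0 ≤ a) (hb : 0 ≤ b)
    (haux : ∀ a b : ℝ, 0 ≤ b → b ≤ a →
      (a + b) ^ p + |a - b| ^ p + (p - 2) * 2 ^ p * ((a + b) / 2) ^ (p - 2) * ((a - b) / 2) ^ 2
        ≤ 2 ^ (p - 1) * (a ^ p + b ^ p)) :
    (a + b) ^ p + |a - b| ^ p + (p - 2) * 2 ^ p * ((a + b) / 2) ^ (p - 2) * ((a - b) / 2) ^ 2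
      ≤ 2 ^ (p - 1) * (a ^ p + b ^ p) := by
  rcases le_total b a with h | h
  · exact haux a b hb h
  · have hsym := haux b a ha h
    rw [add_comm b a, abs_sub_comm b a, add_comm (b ^ p),
      show ((b - a) / 2) ^ 2 = ((a - b) / 2) ^ 2 by ring] at hsym
    exact hsym

private lemma pairs (p u w : ℝ) :
    |u - w| ^ p + |u + w| ^ p = (|u| + |w|) ^ p + |(|u| - |w|)| ^ p := by
  rcases le_total 0 u with hu | hu <;> rcases le_total 0 w with hw | hw
  · rw [abs_of_nonneg hu, abs_of_nonneg hw,
      abs_of_nonneg (by linarith : (0:ℝ) ≤ u + w)]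
    exact add_comm _ _
  · rw [abs_of_nonneg hu, abs_of_nonpos hw,
      show u + -w = u - w by ring,
      abs_of_nonneg (by linarith : (0:ℝ) ≤ u - w),
      show u - -w = u + w by ring]
  · have h1 : -u + w = |u - w| := by
      rw [abs_of_nonpos (by linarith : u - w ≤ 0)]; ring
    have h2 : |-u - w| = |u + w| := by
      rw [show -u - w = -(u + w) by ring, abs_neg]
    rw [abs_of_nonpos hu, abs_of_nonneg hw, h1, h2]
  · have h1 : -u + -w = |u + w| := by
      rw [abs_of_nonpos (by linarith : u + w ≤ 0)]; ring
    have h2 : |-u - -w| = |u - w| := by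
      rw [show -u - -w = -(u - w) by ring, abs_neg]
    rw [abs_of_nonpos hu, abs_of_nonpos hw, h1, h2]
    exact add_comm _ _

private lemma exists_step (v : ℕ → ℝ) (L : ℕ) (hL1 : 1 ≤ L) (c : ℝ) (hc : 0 < c)
    (hdrop : v L ≤ v 0 - c) :
    ∃ u < L, v 0 - c < v u ∧ c / L ≤ |v u - v (u + 1)| := by
  classical
  have hex : ∃ T, v T ≤ v 0 - c := ⟨L, hdrop⟩
  set T := Nat.find hex with hTdef
  have hTspec : v T ≤ v 0 - c := Nat.find_spec hex
  have hTle : T ≤ L := Nat.find_le hdrop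
  have hTpos : 0 < T := by
    rcases Nat.eq_zero_or_pos T with h | h
    · exfalso; rw [h] at hTspec; linarith
    · exact h
  have hmin : ∀ u < T, v 0 - c < v u := fun u hu =>
    lt_of_not_ge (Nat.find_min hex hu)
  have htel : ∑ i ∈ Finset.range T, (v i - v (i + 1)) = v 0 - v T :=
    Finset.sum_range_sub' v T
  have hsum : c ≤ ∑ i ∈ Finset.range T, |v i - v (i + 1)| := by
    calc c ≤ v 0 - v T := by linarith
      _ = ∑ i ∈ Finset.range T, (v i - v (i + 1)) := htel.symm
      _ ≤ ∑ i ∈ Finset.range T, |v i - v (i + 1)| :=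
          Finset.sum_le_sum fun i _ => le_abs_self _
  by_contra hcon
  push_neg at hcon
  have hlt : ∀ i ∈ Finset.range T, |v i - v (i + 1)| < c / L := by
    intro i hi
    rw [Finset.mem_range] at hi
    exact hcon i (lt_of_lt_of_le hi hTle) (hmin i hi)
  have hL0 : (0:ℝ) < L := by exact_mod_cast hL1
  have hTLc : (T:ℝ) * (c / L) ≤ c := by
    have hTL : (T:ℝ) ≤ L := by exact_mod_cast hTle
    calc (T:ℝ) * (c / L) ≤ L * (c / L) :=
        mul_le_mul_of_nonneg_right hTL (by positivity)
      _ = c := by field_simp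
  have hbig : ∑ i ∈ Finset.range T, |v i - v (i + 1)| < (T:ℝ) * (c / L) := by
    have hne : (Finset.range T).Nonempty := ⟨0, Finset.mem_range.mpr hTpos⟩
    calc ∑ i ∈ Finset.range T, |v i - v (i + 1)|
        < ∑ _i ∈ Finset.range T, (c / L) := Finset.sum_lt_sum_of_nonempty hne hlt
      _ = (T:ℝ) * (c / L) := by
          rw [Finset.sum_const, Finset.card_range, nsmul_eq_mul]
  linarith

/-- If `y` lies on the sphere `‖y‖_p^p = n` and is at `∞`-distance at least `c`
from every sign vector, then `‖Ay‖_p^p ≤ n·2^p - (3(p-2)/(2^p n²)) c²`. -/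
theorem stmt_13 (n : ℕ) (hn : 2 ≤ n) (p c : ℝ) (hp : 2 < p) (hc0 : 0 < c) (hc : c ≤ 1 / 2)
    (A : Matrix (Fin n × Fin 2) (Fin n) ℝ)
    (hA : ∀ (i j : Fin n),
      A (i, 0) j = (if j = i then 1 else if j = i + ⟨1, by omega⟩ then -1 else 0) ∧
      A (i, 1) j = (if j = i then 1 else if j = i + ⟨1, by omega⟩ then 1 else 0))
    (y : Fin n → ℝ) (hy : (∑ j, |y j| ^ p) = n)
    (hfar : ∀ x : Fin n → ℝ, (∀ j, x j = 1 ∨ x j = -1) → ∃ j, c ≤ |y j - x j|) :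
    ∑ r, |∑ j, A r j * y j| ^ p ≤
      (n : ℝ) * 2 ^ p - (3 * (p - 2) / (2 ^ p * (n : ℝ) ^ (2 : ℕ))) * c ^ (2 : ℕ) := by
  haveI : NeZero n := ⟨by omega⟩
  have hppos : (0:ℝ) < p := by linarith
  have hone : (⟨1, by omega⟩ : Fin n) = 1 := by
    apply Fin.ext
    have h1 : ((⟨1, (by omega : 1 < n)⟩ : Fin n) : ℕ) = 1 := rfl
    rw [h1, Fin.val_one']
    exact (Nat.mod_eq_of_lt (by omega)).symm
  have hne1 : ∀ i : Fin n, i ≠ i + 1 := by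
    intro i h
    have h' := congrArg Fin.val h
    rw [Fin.val_add, Fin.val_one'] at h'
    have hi := i.isLt
    have hmod : 1 % n = 1 := Nat.mod_eq_of_lt (by omega)
    rw [hmod] at h'
    rcases Nat.lt_or_ge (i.val + 1) n with hlt | hge
    · rw [Nat.mod_eq_of_lt hlt] at h'
      omega
    · have heq : i.val + 1 = n := by omega
      rw [heq, Nat.mod_self] at h'
      omega
  -- rows of A
  have row0 : ∀ i : Fin n, (∑ j, A (i, 0) j * y j) = y i - y (i + 1) := by
    intro i
    have hsplit : ∀ j : Fin n, A (i, 0) j * y j =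
        (if j = i then y j else 0) + (if j = i + 1 then -y j else 0) := by
      intro j
      rw [(hA i j).1, hone]
      by_cases h1 : j = i
      · rw [if_pos h1, if_pos h1, if_neg (show j ≠ i + 1 by rw [h1]; exact hne1 i)]
        ring
      · rw [if_neg h1, if_neg h1]
        by_cases h2 : j = i + 1
        · rw [if_pos h2, if_pos h2]; ring
        · rw [if_neg h2, if_neg h2]; ring
    calc (∑ j, A (i, 0) j * y j)
        = ∑ j, ((if j = i then y j else 0) + (if j = i + 1 then -y j else 0)) :=
          Finset.sum_congr rfl fun j _ => hsplit j
      _ = y i - y (i + 1) := by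
          rw [Finset.sum_add_distrib, Finset.sum_ite_eq' Finset.univ i (fun j => y j),
            Finset.sum_ite_eq' Finset.univ (i + 1) (fun j => -y j)]
          simp [sub_eq_add_neg]
  have row1 : ∀ i : Fin n, (∑ j, A (i, 1) j * y j) = y i + y (i + 1) := by
    intro i
    have hsplit : ∀ j : Fin n, A (i, 1) j * y j =
        (if j = i then y j else 0) + (if j = i + 1 then y j else 0) := by
      intro j
      rw [(hA i j).2, hone]
      by_cases h1 : j = i
      · rw [if_pos h1, if_pos h1, if_neg (show j ≠ i + 1 by rw [h1]; exact hne1 i)]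
        ring
      · rw [if_neg h1, if_neg h1]
        by_cases h2 : j = i + 1
        · rw [if_pos h2, if_pos h2]; ring
        · rw [if_neg h2, if_neg h2]; ring
    calc (∑ j, A (i, 1) j * y j)
        = ∑ j, ((if j = i then y j else 0) + (if j = i + 1 then y j else 0)) :=
          Finset.sum_congr rfl fun j _ => hsplit j
      _ = y i + y (i + 1) := by
          rw [Finset.sum_add_distrib, Finset.sum_ite_eq' Finset.univ i (fun j => y j),
            Finset.sum_ite_eq' Finset.univ (i + 1) (fun j => y j)]
          simp
  have hLHS : (∑ r : Fin n × Fin 2, |∑ j, A r j * y j| ^ p)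
      = ∑ i : Fin n, (|y i - y (i + 1)| ^ p + |y i + y (i + 1)| ^ p) := by
    rw [Fintype.sum_prod_type]
    refine Finset.sum_congr rfl fun i _ => ?_
    rw [Fin.sum_univ_two, row0 i, row1 i]
  set s : Fin n → ℝ := fun i => |y i| with hs
  have hs0 : ∀ i, 0 ≤ s i := fun i => abs_nonneg _
  have hnOne : Nonempty (Fin n) := ⟨⟨0, by omega⟩⟩
  have hcard : (Finset.univ : Finset (Fin n)).card = n := by simp
  have hmax : ∃ k, 1 ≤ s k := by
    by_contra hcon
    push_neg at hcon
    have hlt : ∑ i, s i ^ p < ∑ _i : Fin n, (1:ℝ) :=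
      Finset.sum_lt_sum_of_nonempty Finset.univ_nonempty
        (fun i _ => Real.rpow_lt_one (hs0 i) (hcon i) hppos)
    rw [hy, Finset.sum_const, hcard, nsmul_eq_mul, mul_one] at hlt
    exact absurd hlt (lt_irrefl _)
  have hlow : ∃ k, s k ≤ 1 := by
    by_contra hcon
    push_neg at hcon
    have hlt : ∑ _i : Fin n, (1:ℝ) < ∑ i, s i ^ p :=
      Finset.sum_lt_sum_of_nonempty Finset.univ_nonempty
        (fun i _ => (Real.one_lt_rpow_iff_of_pos
          (lt_trans one_pos (hcon i))).mpr (Or.inl ⟨hcon i, hppos⟩))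
    rw [hy, Finset.sum_const, hcard, nsmul_eq_mul, mul_one] at hlt
    exact absurd hlt (lt_irrefl _)
  have hsign : ∃ j, c ≤ |s j - 1| := by
    obtain ⟨j, hj⟩ := hfar (fun j => if 0 ≤ y j then 1 else -1)
      (fun j => by by_cases h : 0 ≤ y j <;> simp [h])
    refine ⟨j, ?_⟩
    by_cases h : 0 ≤ y j
    · rw [if_pos h] at hj
      show c ≤ |(|y j| - 1)|
      rwa [abs_of_nonneg h]
    · rw [if_neg h] at hj
      push_neg at h
      show c ≤ |(|y j| - 1)|
      rw [abs_of_nonpos h.le, show -y j - 1 = -(y j + 1) by ring, abs_neg]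
      rwa [show y j - (-1) = y j + 1 by ring] at hj
  obtain ⟨j₁, hj₁⟩ := hsign
  have hkey : ∃ k₀ j₀ : Fin n, 1 ≤ s k₀ ∧ s j₀ ≤ s k₀ - c := by
    rcases le_abs.mp hj₁ with h | h
    · obtain ⟨k, hk⟩ := hlow
      exact ⟨j₁, k, by linarith, by linarith⟩
    · obtain ⟨k, hk⟩ := hmax
      exact ⟨k, j₁, hk, by linarith⟩
  obtain ⟨k₀, j₀, hk₀, hj₀⟩ := hkey
  have hdne : j₀ - k₀ ≠ 0 := by
    intro h0
    rw [sub_eq_zero] at h0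
    rw [h0] at hj₀
    linarith
  set L : ℕ := (j₀ - k₀).val with hLdef
  have hL1 : 1 ≤ L := by
    rcases Nat.eq_zero_or_pos L with h | h
    · exfalso
      exact hdne (Fin.ext (by rw [Fin.val_zero]; exact h))
    · exact h
  have hLn : L < n := (j₀ - k₀).isLt
  letI : NatCast (Fin n) := Fin.NatCast.instNatCast n
  set v : ℕ → ℝ := fun u => s (k₀ + (u : Fin n)) with hv
  have hv0 : v 0 = s k₀ := by simp only [hv]; congr 1; ext; simp [Fin.val_add, Fin.val_natCast]
  have hvL : v L = s j₀ := by
    simp only [hv, hLdef, Fin.cast_val_eq_self]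
    rw [add_comm, sub_add_cancel]
  obtain ⟨u, huL, hvu, hstep⟩ := exists_step v L hL1 c hc0 (by rw [hv0, hvL]; linarith)
  set i0 : Fin n := k₀ + (u : Fin n) with hi0
  have hvu' : v u = s i0 := by rw [hv, hi0]
  have hvu1 : v (u + 1) = s (i0 + 1) := by
    simp only [hv, hi0, add_assoc]; congr 2; ext; simp [Fin.val_add, Fin.val_natCast, Fin.val_one']
  have ha1 : 1 - c ≤ s i0 := by
    rw [hv0, hvu'] at hvu
    linarith
  have hdiff : c / n ≤ |s i0 - s (i0 + 1)| := by
    rw [hvu', hvu1] at hstep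
    have hLpos : (0:ℝ) < L := by exact_mod_cast hL1
    have hLn' : (L:ℝ) ≤ n := by exact_mod_cast hLn.le
    have h1 : c / (n:ℝ) ≤ c / (L:ℝ) := by
      apply div_le_div_of_nonneg_left hc0.le hLpos hLn'
    linarith
  -- per-edge deficit
  set D : Fin n → ℝ := fun i =>
    (p - 2) * 2 ^ p * ((s i + s (i + 1)) / 2) ^ (p - 2) * ((s i - s (i + 1)) / 2) ^ 2 with hD
  have hD0 : ∀ i, 0 ≤ D i := by
    intro i
    apply mul_nonneg (mul_nonneg (mul_nonneg (by linarith)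
      (Real.rpow_pos_of_pos two_pos p).le)
      (Real.rpow_nonneg (by linarith [hs0 i, hs0 (i + 1)]) _)) (sq_nonneg _)
  have hedge : ∀ i : Fin n,
      |y i - y (i + 1)| ^ p + |y i + y (i + 1)| ^ p + D i
        ≤ 2 ^ (p - 1) * (s i ^ p + s (i + 1) ^ p) := by
    intro i
    have hcl := clarkson p hp (s i) (s (i + 1)) (hs0 i) (hs0 (i + 1))
      (fun a b hb hab => clarkson_aux p hp a b hb hab)
    have hpr := pairs p (y i) (y (i + 1))
    show |y i - y (i + 1)| ^ p + |y i + y (i + 1)| ^ p +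
      (p - 2) * 2 ^ p * ((s i + s (i + 1)) / 2) ^ (p - 2) * ((s i - s (i + 1)) / 2) ^ 2 ≤ _
    rw [hpr]
    exact hcl
  have hshift : ∑ i : Fin n, s (i + 1) ^ p = ∑ i : Fin n, s i ^ p :=
    Fintype.sum_equiv (Equiv.addRight (1 : Fin n)) _ _ (fun _ => rfl)
  have e6 : (2:ℝ) ^ p = 2 ^ (p - 1) * 2 := by
    rw [← Real.rpow_add_one (by norm_num : (2:ℝ) ≠ 0) (p - 1)]
    norm_num
  have hsum1 : ∑ i : Fin n, (|y i - y (i + 1)| ^ p + |y i + y (i + 1)| ^ p)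
      ≤ (n:ℝ) * 2 ^ p - D i0 := by
    have step1 : ∑ i : Fin n, (|y i - y (i + 1)| ^ p + |y i + y (i + 1)| ^ p)
        ≤ ∑ i : Fin n, (2 ^ (p - 1) * (s i ^ p + s (i + 1) ^ p)
            - (if i = i0 then D i0 else 0)) := by
      apply Finset.sum_le_sum
      intro i _
      by_cases h : i = i0
      · rw [if_pos h, ← h]
        linarith [hedge i]
      · rw [if_neg h]
        linarith [hedge i, hD0 i]
    have step2 : ∑ i : Fin n, (2 ^ (p - 1) * (s i ^ p + s (i + 1) ^ p)
          - (if i = i0 then D i0 else 0))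
        = (n:ℝ) * 2 ^ p - D i0 := by
      rw [Finset.sum_sub_distrib,
        Finset.sum_ite_eq' Finset.univ i0 (fun _ => D i0),
        if_pos (Finset.mem_univ i0), ← Finset.mul_sum, Finset.sum_add_distrib,
        hshift, hy, e6]
      ring
    linarith [step1, step2.le, step2.ge]
  -- final numeric bound
  have hn0 : (0:ℝ) < n := by exact_mod_cast (show 0 < n by omega)
  have hmu : (1:ℝ)/4 ≤ (s i0 + s (i0 + 1)) / 2 := by
    have := hs0 (i0 + 1)
    linarith
  have hmup : ((1:ℝ)/4) ^ (p - 2) ≤ ((s i0 + s (i0 + 1)) / 2) ^ (p - 2) :=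
    Real.rpow_le_rpow (by norm_num) hmu (by linarith)
  have h2p : (0:ℝ) < 2 ^ p := Real.rpow_pos_of_pos two_pos p
  have hq : (2:ℝ) ^ p * ((1:ℝ)/4) ^ (p - 2) = 16 / 2 ^ p := by
    have h14 : ((1:ℝ)/4) = (2:ℝ) ^ (-2 : ℝ) := by
      rw [show (-2:ℝ) = ((-2 : ℤ) : ℝ) by norm_num, Real.rpow_intCast]
      norm_num
    rw [h14, ← Real.rpow_mul (by norm_num : (0:ℝ) ≤ 2),
      ← Real.rpow_add two_pos, show p + (-2) * (p - 2) = 4 - p by ring,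
      Real.rpow_sub two_pos, show (4:ℝ) = ((4:ℕ):ℝ) by norm_num,
      Real.rpow_natCast]
    norm_num
  have hdsq : c ^ 2 / (n:ℝ) ^ 2 / 4 ≤ ((s i0 - s (i0 + 1)) / 2) ^ 2 := by
    have h1 : (c / n) ^ 2 ≤ |s i0 - s (i0 + 1)| ^ 2 :=
      pow_le_pow_left₀ (by positivity) hdiff 2
    rw [sq_abs, div_pow] at h1
    have h2 : ((s i0 - s (i0 + 1)) / 2) ^ 2 = (s i0 - s (i0 + 1)) ^ 2 / 4 := by ring
    rw [h2]
    linarith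
  have hDi0 : 3 * (p - 2) / (2 ^ p * (n:ℝ) ^ (2 : ℕ)) * c ^ (2 : ℕ) ≤ D i0 := by
    have hstep2 : (16 / 2 ^ p) * (c ^ 2 / (n:ℝ) ^ 2 / 4)
        ≤ (2 ^ p * ((s i0 + s (i0 + 1)) / 2) ^ (p - 2)) * ((s i0 - s (i0 + 1)) / 2) ^ 2 := by
      apply mul_le_mul ?_ hdsq (by positivity) ?_
      · rw [← hq]
        exact mul_le_mul_of_nonneg_left hmup h2p.le
      · positivity
    have ht0 : 0 ≤ (p - 2) * c ^ 2 / (2 ^ p * (n:ℝ) ^ 2) :=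
      div_nonneg (mul_nonneg (by linarith) (sq_nonneg c)) (by positivity)
    have hid : (p - 2) * ((16 / 2 ^ p) * (c ^ 2 / (n:ℝ) ^ 2 / 4))
        = 4 * ((p - 2) * c ^ 2 / (2 ^ p * (n:ℝ) ^ 2)) := by
      field_simp
      ring
    have hid2 : 3 * (p - 2) / (2 ^ p * (n:ℝ) ^ (2 : ℕ)) * c ^ (2 : ℕ)
        = 3 * ((p - 2) * c ^ 2 / (2 ^ p * (n:ℝ) ^ 2)) := by
      ring
    calc 3 * (p - 2) / (2 ^ p * (n:ℝ) ^ (2 : ℕ)) * c ^ (2 : ℕ)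
        = 3 * ((p - 2) * c ^ 2 / (2 ^ p * (n:ℝ) ^ 2)) := hid2
      _ ≤ 4 * ((p - 2) * c ^ 2 / (2 ^ p * (n:ℝ) ^ 2)) := by linarith
      _ = (p - 2) * ((16 / 2 ^ p) * (c ^ 2 / (n:ℝ) ^ 2 / 4)) := hid.symm
      _ ≤ (p - 2) * ((2 ^ p * ((s i0 + s (i0 + 1)) / 2) ^ (p - 2))
            * ((s i0 - s (i0 + 1)) / 2) ^ 2) :=
          mul_le_mul_of_nonneg_left hstep2 (by linarith)
      _ = D i0 := by rw [hD]; ring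
  calc (∑ r : Fin n × Fin 2, |∑ j, A r j * y j| ^ p)
      = ∑ i : Fin n, (|y i - y (i + 1)| ^ p + |y i + y (i + 1)| ^ p) := hLHS
    _ ≤ (n:ℝ) * 2 ^ p - D i0 := hsum1
    _ ≤ (n : ℝ) * 2 ^ p - (3 * (p - 2) / (2 ^ p * (n : ℝ) ^ (2 : ℕ))) * c ^ (2 : ℕ) := by
        linarith [hDi0]
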